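/- Let I = (𝔼, D, c, f) be a CMP instance whose objective f is of type sum, product, or bottleneck, and let E = {e_1,…,e_k} ⊆ 𝔼 be such that there exists an optimal solution S* of I with E ⊆ 𝔼 ∖ S*. Then l_b'(I,E) = inf{α ∈ ℝ : there exist an optimal solution S* of I and α⃗ = (α_1,…,α_k) with 0 ≤ α_l < maxdec(e_l) for all l and α = Σ_{l=1}^k α_l such that S* is not optimal for I_{−α⃗,E}}, i.e., the new reverse set lower tolerance coincides with the current reverse set lower tolerance of E. -/
import Mathlib


open scoped ENNReal BigOperators

/-- Objective type of a combinatorial minimization problem: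
sum, product, or bottleneck. -/
inductive ObjType where
  | sum : ObjType
  | prod : ObjType
  | bottleneck : ObjType
deriving DecidableEq

/-- The cost `f_c(S)` of a feasible solution `S` under cost function `c`:
the sum, the product, or the maximum (for nonempty `S`) of the element costs. -/
noncomputable def objCost {ι : Type*} (t : ObjType) (c : ι → ℝ) (S : Finset ι) : ℝ :=
  match t with
  | ObjType.sum => ∑ e ∈ S, c e
  | ObjType.prod => ∏ e ∈ S, c e
  | ObjType.bottleneck => if h : S.Nonempty then S.sup' h c else 0

/-- The optimal objective value `f(I)` of the instance with feasible set `D`. -/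
noncomputable def optVal {ι : Type*} (t : ObjType) (c : ι → ℝ) (D : Finset (Finset ι)) : ℝ :=
  if h : D.Nonempty then D.inf' h (objCost t c) else 0

/-- `S` is an optimal solution of the instance `(𝔼, D, c, f)`. -/
def isOpt {ι : Type*} (t : ObjType) (c : ι → ℝ) (D : Finset (Finset ι)) (S : Finset ι) : Prop :=
  S ∈ D ∧ objCost t c S = optVal t c D

/-- `0 ≤ a < maxdec(e)`, where `maxdec(e) = ∞` for sum/bottleneck objectives and
`maxdec(e) = c(e)` for the product objective. -/
def decOK {ι : Type*} (t : ObjType) (c : ι → ℝ) (e : ι) (a : ℝ) : Prop :=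
  0 ≤ a ∧ (t = ObjType.prod → a < c e)

/-- Extended single upper tolerance
`u'(I,e) = sup {α ≥ 0 : every optimal solution of I is optimal for I_{α,e}}` valued in `[0,∞]`. -/
noncomputable def uTol {ι : Type*} [DecidableEq ι] (t : ObjType) (c : ι → ℝ)
    (D : Finset (Finset ι)) (e : ι) : ℝ≥0∞ :=
  sSup (ENNReal.ofReal '' {a : ℝ | 0 ≤ a ∧
    ∀ S : Finset ι, isOpt t c D S →
      isOpt t (fun x => if x = e then c x + a else c x) D S})

/-- Extended regular set upper tolerance `u'(I,E)`, valued in `[0,∞]`. -/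
noncomputable def uTolSet {ι : Type*} [DecidableEq ι] (t : ObjType) (c : ι → ℝ)
    (D : Finset (Finset ι)) (E : Finset ι) : ℝ≥0∞ :=
  sSup (ENNReal.ofReal '' {a : ℝ |
    ∀ S : Finset ι, isOpt t c D S →
      ∃ α : ι → ℝ, (∀ x, 0 ≤ α x) ∧ (∀ x ∉ E, α x = 0) ∧
        a = ∑ x ∈ E, α x ∧ isOpt t (fun x => c x + α x) D S})

/-- Extended reverse set upper tolerance `u_b'(I,E)`, valued in `[0,∞]` (`inf ∅ = ∞`). -/
noncomputable def uTolSetRev {ι : Type*} [DecidableEq ι] (t : ObjType) (c : ι → ℝ)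
    (D : Finset (Finset ι)) (E : Finset ι) : ℝ≥0∞ :=
  sInf (ENNReal.ofReal '' {a : ℝ |
    ∃ S : Finset ι, isOpt t c D S ∧
      ∃ α : ι → ℝ, (∀ x, 0 ≤ α x) ∧ (∀ x ∉ E, α x = 0) ∧
        a = ∑ x ∈ E, α x ∧ ¬ isOpt t (fun x => c x + α x) D S})

/-- New single lower tolerance
`l'(I,e) = sup {α : 0 ≤ α < maxdec(e), f(I_{−α,e}) = f(I)}`, valued in `[0,∞]`. -/
noncomputable def lTol {ι : Type*} [DecidableEq ι] (t : ObjType) (c : ι → ℝ)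
    (D : Finset (Finset ι)) (e : ι) : ℝ≥0∞ :=
  sSup (ENNReal.ofReal '' {a : ℝ | decOK t c e a ∧
    optVal t (fun x => if x = e then c x - a else c x) D = optVal t c D})

/-- New regular set lower tolerance `l'(I,E)`, valued in `[0,∞]`. -/
noncomputable def lTolSet {ι : Type*} [DecidableEq ι] (t : ObjType) (c : ι → ℝ)
    (D : Finset (Finset ι)) (E : Finset ι) : ℝ≥0∞ :=
  sSup (ENNReal.ofReal '' {a : ℝ |
    ∃ α : ι → ℝ, (∀ x ∈ E, decOK t c x (α x)) ∧ (∀ x ∉ E, α x = 0) ∧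
      a = ∑ x ∈ E, α x ∧ optVal t (fun x => c x - α x) D = optVal t c D})

/-- New reverse set lower tolerance `l_b'(I,E)`, valued in `[0,∞]` (`inf ∅ = ∞`). -/
noncomputable def lTolSetRev {ι : Type*} [DecidableEq ι] (t : ObjType) (c : ι → ℝ)
    (D : Finset (Finset ι)) (E : Finset ι) : ℝ≥0∞ :=
  sInf (ENNReal.ofReal '' {a : ℝ |
    ∃ α : ι → ℝ, (∀ x ∈ E, decOK t c x (α x)) ∧ (∀ x ∉ E, α x = 0) ∧
      a = ∑ x ∈ E, α x ∧ optVal t (fun x => c x - α x) D < optVal t c D})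



lemma objCost_congr {ι : Type*} (t : ObjType) {c c' : ι → ℝ} {S : Finset ι}
    (h : ∀ x ∈ S, c' x = c x) : objCost t c' S = objCost t c S := by
  cases t with
  | sum => exact Finset.sum_congr rfl h
  | prod => exact Finset.prod_congr rfl h
  | bottleneck =>
    simp only [objCost]
    split
    · exact Finset.sup'_congr _ rfl h
    · rfl

lemma objCost_mono {ι : Type*} (t : ObjType) {c c' : ι → ℝ} {S : Finset ι}
    (h : ∀ x, c' x ≤ c x) (hp : t = ObjType.prod → ∀ x, 0 ≤ c' x) :
    objCost t c' S ≤ objCost t c S := by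
  cases t with
  | sum => exact Finset.sum_le_sum fun x _ => h x
  | prod => exact Finset.prod_le_prod (fun x _ => hp rfl x) (fun x _ => h x)
  | bottleneck =>
    simp only [objCost]
    split
    · exact Finset.sup'_mono_fun fun x _ => h x
    · rfl

lemma optVal_mono {ι : Type*} (t : ObjType) {c c' : ι → ℝ} {D : Finset (Finset ι)}
    (hD : D.Nonempty) (h : ∀ x, c' x ≤ c x) (hp : t = ObjType.prod → ∀ x, 0 ≤ c' x) :
    optVal t c' D ≤ optVal t c D := by
  simp only [optVal, dif_pos hD]
  obtain ⟨S, hS, hval⟩ := Finset.exists_mem_eq_inf' hD (objCost t c)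
  rw [hval]
  exact le_trans (Finset.inf'_le _ hS) (objCost_mono t h hp)

/-- Theorem 4(c) (consistency): if some optimal solution is disjoint from `E`,
then the new reverse set lower tolerance `l_b'(I,E)` coincides with the current
reverse set lower tolerance. -/
theorem lrv_consistent {ι : Type*} [Fintype ι] [DecidableEq ι]
    (t : ObjType) (c : ι → ℝ) (D : Finset (Finset ι))
    (hD : D.Nonempty) (hSne : ∀ S ∈ D, S.Nonempty)
    (hpos : t = ObjType.prod → ∀ x, 0 < c x)
    (E : Finset ι) (hE : E.Nonempty)
    (hout : ∃ S : Finset ι, isOpt t c D S ∧ ∀ x ∈ E, x ∉ S) :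
    lTolSetRev t c D E =
      sInf (ENNReal.ofReal '' {a : ℝ |
        ∃ S : Finset ι, isOpt t c D S ∧
          ∃ α : ι → ℝ, (∀ x ∈ E, decOK t c x (α x)) ∧ (∀ x ∉ E, α x = 0) ∧
            a = ∑ x ∈ E, α x ∧ ¬ isOpt t (fun x => c x - α x) D S}) := by
  refine congrArg sInf (congrArg (Set.image ENNReal.ofReal) ?_)
  ext a
  simp only [Set.mem_setOf_eq, lTolSetRev]
  constructor
  · rintro ⟨α, h1, h2, h3, hlt⟩
    obtain ⟨S, hopt, hdisj⟩ := hout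
    refine ⟨S, hopt, α, h1, h2, h3, ?_⟩
    intro hiso
    have hcong : objCost t (fun x => c x - α x) S = objCost t c S := by
      apply objCost_congr
      intro x hx
      have : α x = 0 := h2 x (fun hxE => hdisj x hxE hx)
      simp [this]
    have h4 := hiso.2
    rw [hcong, hopt.2] at h4
    rw [← h4] at hlt
    exact absurd hlt (lt_irrefl _)
  · rintro ⟨S, hopt, α, h1, h2, h3, hnot⟩
    refine ⟨α, h1, h2, h3, ?_⟩
    have hanneg : ∀ x, 0 ≤ α x := by
      intro x
      by_cases hx : x ∈ E
      · exact (h1 x hx).1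
      · simp [h2 x hx]
    have hle : ∀ x, c x - α x ≤ c x := fun x => by linarith [hanneg x]
    have hp : t = ObjType.prod → ∀ x, 0 ≤ c x - α x := by
      intro ht x
      by_cases hx : x ∈ E
      · linarith [(h1 x hx).2 ht]
      · have := hpos ht x; simp [h2 x hx]; linarith
    have hmono := optVal_mono t hD hle hp
    rcases lt_or_eq_of_le hmono with h | h
    · exact h
    · exfalso
      apply hnot
      refine ⟨hopt.1, le_antisymm ?_ ?_⟩
      · calc objCost t (fun x => c x - α x) S ≤ objCost t c S := objCost_mono t hle hp
          _ = optVal t c D := hopt.2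
          _ = optVal t (fun x => c x - α x) D := h.symm
      · simp only [optVal, dif_pos hD]
        exact Finset.inf'_le _ hopt.1
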